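/- Define H : ℝ³ → ℝ by H(ξ) = ‖ξ‖·√(2 + ‖ξ‖²). For every ξ ∈ ℝ³ with ξ ≠ 0, the second derivative (Hessian) of H at ξ satisfies: D²H(ξ)[ξ/‖ξ‖, ξ/‖ξ‖] = 2‖ξ‖(3 + ‖ξ‖²)/(2 + ‖ξ‖²)^{3/2}; for every v ∈ ℝ³ orthogonal to ξ with ‖v‖ = 1, D²H(ξ)[v, v] = 2(1 + ‖ξ‖²)/(‖ξ‖·√(2 + ‖ξ‖²)); and D²H(ξ)[ξ, v] = 0 for every v orthogonal to ξ. In particular the Hessian of H at ξ has eigenvalue 2‖ξ‖(3+‖ξ‖²)/(2+‖ξ‖²)^{3/2} with eigenvector ξ and eigenvalue 2(1+‖ξ‖²)/(‖ξ‖√(2+‖ξ‖²)) with multiplicity 2 on the orthogonal complement of ξ. -/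

import Mathlib

open Real

noncomputable def psiAux (t : ℝ) : ℝ := Real.sqrt (t ^ 2 + 2 * t)

lemma psiAux_pos {t : ℝ} (ht : 0 < t) : 0 < psiAux t :=
  Real.sqrt_pos.2 (by nlinarith)

lemma psiAux_sq {t : ℝ} (ht : 0 < t) : psiAux t ^ 2 = t ^ 2 + 2 * t :=
  Real.sq_sqrt (by nlinarith)

lemma hasDerivAt_psiAux {t : ℝ} (ht : 0 < t) :
    HasDerivAt psiAux ((t + 1) / psiAux t) t := by
  have h0 : (0 : ℝ) < t ^ 2 + 2 * t := by nlinarith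
  have h1 : HasDerivAt (fun s : ℝ => s ^ 2 + 2 * s) (2 * t + 2) t := by
    exact ((hasDerivAt_pow 2 t).add ((hasDerivAt_id t).const_mul 2)).congr_deriv (by norm_num)
  have h2 := (Real.hasDerivAt_sqrt h0.ne').comp t h1
  have hw : psiAux t ≠ 0 := (psiAux_pos ht).ne'
  refine h2.congr_deriv ?_
  unfold psiAux
  field_simp

lemma hasDerivAt_phiAux {t : ℝ} (ht : 0 < t) :
    HasDerivAt (fun s => 2 * (s + 1) / psiAux s) (-2 / (psiAux t) ^ 3) t := by
  have hw : psiAux t ≠ 0 := (psiAux_pos ht).ne'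
  have hn : HasDerivAt (fun s : ℝ => 2 * (s + 1)) 2 t := by
    simpa using ((hasDerivAt_id t).add_const 1).const_mul 2
  have h := hn.div (hasDerivAt_psiAux ht) hw
  refine h.congr_deriv ?_
  have hsq := psiAux_sq ht
  field_simp
  linear_combination hsq

section FD
variable {E : Type*} [NormedAddCommGroup E] [InnerProductSpace ℝ E]

lemma hasFDerivAt_psiNorm {x : E} (hx : x ≠ 0) :
    HasFDerivAt (fun y : E => psiAux (‖y‖ ^ 2))
      ((2 * (‖x‖ ^ 2 + 1) / psiAux (‖x‖ ^ 2)) • innerSL ℝ x) x := by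
  have ht : 0 < ‖x‖ ^ 2 := pow_pos (norm_pos_iff.2 hx) 2
  have h1 := (hasDerivAt_psiAux ht).comp_hasFDerivAt x
    (hasStrictFDerivAt_norm_sq x).hasFDerivAt
  refine h1.congr_fderiv ?_
  ext y
  simp only [ContinuousLinearMap.smul_apply, smul_eq_mul, two_smul,
    ContinuousLinearMap.add_apply]
  ring

lemma hasFDerivAt_cAux {x : E} (hx : x ≠ 0) :
    HasFDerivAt (fun y : E => 2 * (‖y‖ ^ 2 + 1) / psiAux (‖y‖ ^ 2))
      ((-2 / (psiAux (‖x‖ ^ 2)) ^ 3) • (2 • innerSL ℝ x)) x := by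
  have ht : 0 < ‖x‖ ^ 2 := pow_pos (norm_pos_iff.2 hx) 2
  exact (hasDerivAt_phiAux ht).comp_hasFDerivAt x
    (hasStrictFDerivAt_norm_sq x).hasFDerivAt

lemma second_deriv {ξ : E} (hξ : ξ ≠ 0) (u v : E) :
    fderiv ℝ (fderiv ℝ (fun y : E => psiAux (‖y‖ ^ 2))) ξ u v =
      (-4 / (psiAux (‖ξ‖ ^ 2)) ^ 3) * (inner ℝ ξ u : ℝ) * (inner ℝ ξ v : ℝ)
      + (2 * (‖ξ‖ ^ 2 + 1) / psiAux (‖ξ‖ ^ 2)) * (inner ℝ u v : ℝ) := by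
  have hev : (fderiv ℝ (fun y : E => psiAux (‖y‖ ^ 2))) =ᶠ[nhds ξ]
      (fun y : E => (2 * (‖y‖ ^ 2 + 1) / psiAux (‖y‖ ^ 2)) • innerSL ℝ y) := by
    filter_upwards [compl_singleton_mem_nhds hξ] with y hy
    exact (hasFDerivAt_psiNorm hy).fderiv
  rw [hev.fderiv_eq]
  have hg : HasFDerivAt (fun y : E => innerSL ℝ y)
      (innerSL ℝ : E →L[ℝ] E →L[ℝ] ℝ) ξ :=
    (innerSL ℝ : E →L[ℝ] E →L[ℝ] ℝ).hasFDerivAt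
  have hG := (hasFDerivAt_cAux hξ).smul hg
  rw [show (fun y : E => (2 * (‖y‖ ^ 2 + 1) / psiAux (‖y‖ ^ 2)) • innerSL ℝ y) =
      ((fun y : E => 2 * (‖y‖ ^ 2 + 1) / psiAux (‖y‖ ^ 2)) • fun y => innerSL ℝ y) from rfl,
    hG.fderiv]
  simp only [ContinuousLinearMap.add_apply, ContinuousLinearMap.smul_apply,
    ContinuousLinearMap.smulRight_apply, smul_eq_mul, two_smul,
    innerSL_apply_apply]
  erw [innerSL_apply_apply]
  ring

end FD

/-- For `H(ξ) = ‖ξ‖·√(2 + ‖ξ‖²)` on `ℝ³` and `ξ ≠ 0`, the Hessian of `H` at `ξ` satisfies: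
`D²H(ξ)[ξ/‖ξ‖, ξ/‖ξ‖] = 2‖ξ‖(3 + ‖ξ‖²)/(2 + ‖ξ‖²)^{3/2}`; for unit `v ⊥ ξ`,
`D²H(ξ)[v, v] = 2(1 + ‖ξ‖²)/(‖ξ‖·√(2 + ‖ξ‖²))`; and `D²H(ξ)[ξ, v] = 0` for `v ⊥ ξ`. -/
theorem stmt_5 (H : EuclideanSpace ℝ (Fin 3) → ℝ)
    (hH : ∀ ξ : EuclideanSpace ℝ (Fin 3), H ξ = ‖ξ‖ * Real.sqrt (2 + ‖ξ‖ ^ 2))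
    (ξ : EuclideanSpace ℝ (Fin 3)) (hξ : ξ ≠ 0) :
    iteratedFDeriv ℝ 2 H ξ ![‖ξ‖⁻¹ • ξ, ‖ξ‖⁻¹ • ξ] =
        2 * ‖ξ‖ * (3 + ‖ξ‖ ^ 2) / (2 + ‖ξ‖ ^ 2) ^ ((3 : ℝ) / 2) ∧
    (∀ v : EuclideanSpace ℝ (Fin 3), (inner ℝ ξ v : ℝ) = 0 → ‖v‖ = 1 →
      iteratedFDeriv ℝ 2 H ξ ![v, v] =
        2 * (1 + ‖ξ‖ ^ 2) / (‖ξ‖ * Real.sqrt (2 + ‖ξ‖ ^ 2))) ∧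
    (∀ v : EuclideanSpace ℝ (Fin 3), (inner ℝ ξ v : ℝ) = 0 →
      iteratedFDeriv ℝ 2 H ξ ![ξ, v] = 0) := by
  have hHe : H = fun y : EuclideanSpace ℝ (Fin 3) => psiAux (‖y‖ ^ 2) := by
    funext y
    rw [hH]
    unfold psiAux
    rw [show (‖y‖ ^ 2) ^ 2 + 2 * ‖y‖ ^ 2 = ‖y‖ ^ 2 * (2 + ‖y‖ ^ 2) by ring,
      Real.sqrt_mul (sq_nonneg _), Real.sqrt_sq (norm_nonneg y)]
  subst hHe
  have hr : 0 < ‖ξ‖ := norm_pos_iff.2 hξ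
  set r : ℝ := ‖ξ‖ with hrdef
  have hs0 : (0:ℝ) < 2 + r ^ 2 := by positivity
  set s : ℝ := Real.sqrt (2 + r ^ 2) with hsdef
  have hs : 0 < s := Real.sqrt_pos.2 hs0
  have hs2 : s ^ 2 = 2 + r ^ 2 := Real.sq_sqrt hs0.le
  have hw : psiAux (r ^ 2) = r * s := by
    unfold psiAux
    rw [show (r ^ 2) ^ 2 + 2 * r ^ 2 = r ^ 2 * (2 + r ^ 2) by ring,
      Real.sqrt_mul (sq_nonneg _), Real.sqrt_sq hr.le]
  have key : ∀ u v : EuclideanSpace ℝ (Fin 3),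
      iteratedFDeriv ℝ 2 (fun y : EuclideanSpace ℝ (Fin 3) => psiAux (‖y‖ ^ 2)) ξ ![u, v] =
        (-4 / (r * s) ^ 3) * (inner ℝ ξ u : ℝ) * (inner ℝ ξ v : ℝ)
        + (2 * (r ^ 2 + 1) / (r * s)) * (inner ℝ u v : ℝ) := by
    intro u v
    rw [iteratedFDeriv_two_apply]
    simp only [Matrix.cons_val_zero, Matrix.cons_val_one, Matrix.head_cons]
    rw [second_deriv hξ u v, hw]
  have h32 : (2 + r ^ 2) ^ ((3:ℝ) / 2) = s ^ 3 := by
    rw [show ((3:ℝ) / 2) = (1 / 2) * 3 by norm_num, Real.rpow_mul hs0.le,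
      ← Real.sqrt_eq_rpow, show ((3:ℝ)) = ((3:ℕ):ℝ) by norm_num, Real.rpow_natCast]
  refine ⟨?_, ?_, ?_⟩
  · rw [key]
    have h1 : (inner ℝ ξ (r⁻¹ • ξ) : ℝ) = r := by
      rw [real_inner_smul_right, real_inner_self_eq_norm_sq, ← hrdef]
      field_simp
    have h2 : (inner ℝ (r⁻¹ • ξ) (r⁻¹ • ξ) : ℝ) = 1 := by
      rw [real_inner_smul_left, real_inner_smul_right, real_inner_self_eq_norm_sq, ← hrdef]
      field_simp
    rw [h1, h2, h32]
    field_simp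
    linear_combination (2 * (r ^ 2 + 1)) * hs2
  · intro v hv hv1
    rw [key, hv]
    have h2 : (inner ℝ v v : ℝ) = 1 := by
      rw [real_inner_self_eq_norm_sq, hv1]; norm_num
    rw [h2]
    field_simp
    ring
  · intro v hv
    rw [key, hv]
    ring
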